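/- Let g : [R₁, ∞) → ℝ be a nonnegative, nondecreasing, differentiable function with g(R) > 0 for all R ≥ R₀ > e, and suppose there is a constant C > 0 such that g(R) ≤ C·R^{1/2}·(log R)^{1/2}·(g'(R))^{1/2} for all R ≥ R₀. Then ∫_{R₀}^{∞} dR/(R log R) ≤ C² ∫_{R₀}^{∞} g'(R)/g(R)² dR; since the left-hand side diverges, the right-hand integral cannot be finite, so no bounded such g exists. In particular, if additionally g is bounded above, a contradiction follows. -/

import Mathlib

open Real Set

/-- Saint-Venant ODE argument, Case I: a positive nondecreasing differentiable
function satisfying `g(R)² ≤ C²·R·log R·g'(R)` on `[R₀, ∞)` with `R₀ > e`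
cannot be bounded above. -/
theorem stmt_0 (g g' : ℝ → ℝ) (C R₀ : ℝ) (hC : 0 < C)
    (hR₀ : Real.exp 1 < R₀)
    (hpos : ∀ R, R₀ ≤ R → 0 < g R)
    (hmono : MonotoneOn g (Set.Ici R₀))
    (hderiv : ∀ R, R₀ ≤ R → HasDerivAt g (g' R) R)
    (hineq : ∀ R, R₀ ≤ R → (g R) ^ 2 ≤ C ^ 2 * R * Real.log R * g' R)
    (hbdd : ∃ M : ℝ, ∀ R, R₀ ≤ R → g R ≤ M) :
    False := by
  have he : (0:ℝ) < Real.exp 1 := Real.exp_pos 1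
  have hR₀1 : (1:ℝ) < R₀ := lt_trans (by nlinarith [Real.add_one_le_exp (1:ℝ)]) hR₀
  have hR₀pos : (0:ℝ) < R₀ := lt_trans one_pos hR₀1
  -- log R > 1 for R ≥ R₀
  have hlog : ∀ R, R₀ ≤ R → 1 < Real.log R := by
    intro R hR
    have : Real.exp 1 < R := lt_of_lt_of_le hR₀ hR
    calc (1:ℝ) = Real.log (Real.exp 1) := (Real.log_exp 1).symm
      _ < Real.log R := Real.log_lt_log he this
  set F : ℝ → ℝ := fun R => 1 / C ^ 2 * Real.log (Real.log R) + 1 / g R with hF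
  have hC2 : (0:ℝ) < C ^ 2 := by positivity
  -- derivative facts
  have hFderiv : ∀ R ∈ Set.Ici R₀, HasDerivAt F
      (1 / C ^ 2 * (1 / Real.log R * (1 / R)) + (-g' R / g R ^ 2)) R := by
    intro R hR
    have hRpos : (0:ℝ) < R := lt_of_lt_of_le hR₀pos hR
    have hlR : 1 < Real.log R := hlog R hR
    have h1 : HasDerivAt (fun x => Real.log (Real.log x)) (1 / Real.log R * (1 / R)) R := by
      have := (Real.hasDerivAt_log (by linarith : Real.log R ≠ 0)).comp R
        (Real.hasDerivAt_log (ne_of_gt hRpos))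
      simpa [Function.comp_def, one_div, mul_comm] using this
    have h2 : HasDerivAt (fun x => 1 / g x) (-g' R / g R ^ 2) R := by
      simpa [one_div, Pi.inv_def] using (hderiv R hR).inv (ne_of_gt (hpos R hR))
    exact (h1.const_mul (1 / C ^ 2)).add h2
  have hcont : ContinuousOn F (Set.Ici R₀) := fun R hR =>
    (hFderiv R hR).continuousAt.continuousWithinAt
  have hdiff : DifferentiableOn ℝ F (interior (Set.Ici R₀)) := by
    rw [interior_Ici]
    exact fun R hR => ((hFderiv R (Set.mem_Ici.mpr (le_of_lt hR))).differentiableAt).differentiableWithinAt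
  have hanti : AntitoneOn F (Set.Ici R₀) := by
    apply antitoneOn_of_deriv_nonpos (convex_Ici R₀) hcont hdiff
    intro R hR
    rw [interior_Ici] at hR
    have hR' : R₀ ≤ R := le_of_lt hR
    rw [(hFderiv R hR').deriv]
    have hRpos : (0:ℝ) < R := lt_of_lt_of_le hR₀pos hR'
    have hlR : 1 < Real.log R := hlog R hR'
    have hg := hpos R hR'
    have hkey := hineq R hR'
    have hRl : (0:ℝ) < C ^ 2 * R * Real.log R := by positivity
    -- g' R ≥ g R ^ 2 / (C² R log R) and so g'/g² ≥ 1/(C² R log R)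
    have hfrac : 1 / C ^ 2 * (1 / Real.log R * (1 / R)) ≤ g' R / g R ^ 2 := by
      have heq : 1 / C ^ 2 * (1 / Real.log R * (1 / R)) = 1 / (C ^ 2 * R * Real.log R) := by
        field_simp
      rw [heq, div_le_div_iff₀ hRl (by positivity)]
      nlinarith
    have : g' R / g R ^ 2 = -(-g' R / g R ^ 2) := by ring
    linarith [hfrac.trans_eq this]
  -- pick T large
  set X := Real.log (Real.log R₀) + C ^ 2 / g R₀ + 1 with hX
  set T := max R₀ (Real.exp (Real.exp X)) with hT
  have hTge : R₀ ≤ T := le_max_left _ _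
  have hTge2 : Real.exp (Real.exp X) ≤ T := le_max_right _ _
  have hlogT : X ≤ Real.log (Real.log T) := by
    have h1 : Real.exp X ≤ Real.log T := by
      calc Real.exp X = Real.log (Real.exp (Real.exp X)) := (Real.log_exp _).symm
        _ ≤ Real.log T := Real.log_le_log (Real.exp_pos _) hTge2
    calc X = Real.log (Real.exp X) := (Real.log_exp _).symm
      _ ≤ Real.log (Real.log T) := Real.log_le_log (Real.exp_pos _) h1
  have hFle : F T ≤ F R₀ := hanti (Set.self_mem_Ici) hTge hTge
  have hgT : 0 < g T := hpos T hTge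
  have hgR₀ : 0 < g R₀ := hpos R₀ le_rfl
  have h1 : 1 / C ^ 2 * Real.log (Real.log T) ≤ 1 / C ^ 2 * Real.log (Real.log R₀) + 1 / g R₀ := by
    have : 0 < 1 / g T := by positivity
    simp only [hF] at hFle
    linarith
  have h2 : Real.log (Real.log T) ≤ Real.log (Real.log R₀) + C ^ 2 / g R₀ := by
    have := mul_le_mul_of_nonneg_left h1 (le_of_lt hC2)
    rw [mul_add] at this
    field_simp at this ⊢
    linarith
  rw [hX] at hlogT
  linarith
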